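/- Over a commutative ring R, every good R-module is semi Hopfian. Explicitly: if M is a nonzero R-module whose zero submodule is a finite intersection of primary submodules, then for every x ∈ R, multiplication by x on M is an isomorphism whenever it is surjective. -/
import Mathlib


open Function

universe u v w

def IsPrimarySubmodule {R : Type u} [CommRing R] {M : Type v} [AddCommGroup M]
    [Module R M] (Q : Submodule R M) : Prop :=
  Q ≠ ⊤ ∧ ∀ x : R,
    Function.Injective (fun m : M ⧸ Q => x • m) ∨ ∃ n : ℕ, ∀ m : M ⧸ Q, x ^ n • m = 0

def IsGood (R : Type u) (M : Type v) [CommRing R] [AddCommGroup M] [Module R M] : Prop :=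
  ∃ (k : ℕ) (Q : Fin k → Submodule R M),
    (∀ i, IsPrimarySubmodule (Q i)) ∧ (⨅ i, Q i) = ⊥

def SemiHopfian (R : Type u) (M : Type v) [CommRing R] [AddCommGroup M]
    [Module R M] : Prop :=
  ∀ x : R, Function.Surjective (fun m : M => x • m) → Function.Bijective (fun m : M => x • m)

theorem isGood_semiHopfian {R : Type u} [CommRing R] {M : Type v} [AddCommGroup M]
    [Module R M] (hM : Nontrivial M) (h : IsGood R M) :
    SemiHopfian R M := by
  intro x hsurj
  refine ⟨?_, hsurj⟩
  obtain ⟨k, Q, hP, hinf⟩ := h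
  have hpow : ∀ n : ℕ, Function.Surjective (fun m : M => x ^ n • m) := by
    intro n
    induction n with
    | zero => intro y; exact ⟨y, by simp⟩
    | succ n ih =>
      intro y
      obtain ⟨z, hz⟩ := hsurj y
      obtain ⟨w, hw⟩ := ih z
      refine ⟨w, ?_⟩
      simp only at hz hw ⊢
      rw [pow_succ, mul_comm, mul_smul, hw, hz]
  have key : ∀ m : M, x • m = 0 → m = 0 := by
    intro m hm
    have hmem : ∀ i, m ∈ Q i := by
      intro i
      rcases (hP i).2 x with hinj | ⟨n, hn⟩
      · have : x • (Submodule.Quotient.mk m : M ⧸ Q i) = x • (0 : M ⧸ Q i) := by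
          rw [smul_zero, ← Submodule.Quotient.mk_smul, hm, Submodule.Quotient.mk_zero]
        exact (Submodule.Quotient.mk_eq_zero (Q i)).mp (hinj this)
      · exfalso
        apply (hP i).1
        rw [Submodule.eq_top_iff']
        intro y
        obtain ⟨z, hz⟩ := hpow n y
        simp only at hz
        have : (Submodule.Quotient.mk y : M ⧸ Q i) = 0 := by
          rw [← hz, Submodule.Quotient.mk_smul]
          exact hn _
        rwa [Submodule.Quotient.mk_eq_zero] at this
    have : m ∈ (⨅ i, Q i) := Submodule.mem_iInf _ |>.mpr hmem
    rw [hinf] at this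
    simpa using this
  intro a b hab
  simp only at hab
  have : x • (a - b) = 0 := by rw [smul_sub, hab, sub_self]
  exact sub_eq_zero.mp (key _ this)
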